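/- Let G = (V,E) be a finite simple undirected graph, let M be a maximal matching of G, let ΔE be a set of edges on V disjoint from E, and let G' = (V, E ∪ ΔE). Let U be the set of vertices that are unmatched by M and incident to some edge of ΔE, let G_I be the subgraph of G' induced by U, and let M_I be any maximal matching of G_I. Then M ∪ M_I is a maximal matching of G'. -/

import Mathlib

/-- `M` is a matching of `G`: a set of edges of `G` that are pairwise vertex-disjoint. -/
def IsMatchingSet {V : Type*} (G : SimpleGraph V) (M : Set (Sym2 V)) : Prop :=
  M ⊆ G.edgeSet ∧ ∀ e ∈ M, ∀ f ∈ M, e ≠ f → ∀ v : V, v ∈ e → v ∉ f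

/-- The vertex `v` is matched (covered) by the edge set `M`. -/
def CoveredBy {V : Type*} (M : Set (Sym2 V)) (v : V) : Prop :=
  ∃ e ∈ M, v ∈ e

/-- `M` is a maximal matching of `G`: a matching to which no edge of `G` can be added. -/
def IsMaximalMatchingSet {V : Type*} (G : SimpleGraph V) (M : Set (Sym2 V)) : Prop :=
  IsMatchingSet G M ∧ ∀ e ∈ G.edgeSet, e ∉ M → ¬ IsMatchingSet G (insert e M)

/-- The subgraph of `G` induced by the vertex set `U` (kept on the same vertex type). -/
def inducedOn {V : Type*} (G : SimpleGraph V) (U : Set V) : SimpleGraph V where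
  Adj x y := G.Adj x y ∧ x ∈ U ∧ y ∈ U
  symm := ⟨fun x y h => ⟨h.1.symm, h.2.2, h.2.1⟩⟩
  loopless := ⟨fun x h => G.loopless.irrefl x h.1⟩

/-- Let `G` be a finite simple undirected graph, `M` a maximal matching of
`G`, `ΔE` a set of edges on `V` disjoint from `E(G)`, and `G' = G + ΔE`. Let `U` be the
set of vertices unmatched by `M` and incident to some edge of `ΔE`, let `G_I` be the
subgraph of `G'` induced by `U`, and let `M_I` be any maximal matching of `G_I`.
Then `M ∪ M_I` is a maximal matching of `G'`. -/
theorem stmt8 {V : Type*} [Fintype V] (G : SimpleGraph V) (M : Set (Sym2 V))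
    (hM : IsMaximalMatchingSet G M) (ΔE : Set (Sym2 V))
    (hdisj : Disjoint ΔE G.edgeSet) (hnd : ∀ e ∈ ΔE, ¬ e.IsDiag)
    (U : Set V) (hU : U = {v | ¬ CoveredBy M v ∧ ∃ e ∈ ΔE, v ∈ e})
    (MI : Set (Sym2 V))
    (hMI : IsMaximalMatchingSet (inducedOn (G ⊔ SimpleGraph.fromEdgeSet ΔE) U) MI) :
    IsMaximalMatchingSet (G ⊔ SimpleGraph.fromEdgeSet ΔE) (M ∪ MI) := by

  obtain ⟨⟨hMsub, hMdisj⟩, hMmax⟩ := hM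
  obtain ⟨⟨hMIsub, hMIdisj⟩, hMImax⟩ := hMI
  -- endpoints of MI edges are in U
  have hMIU : ∀ e ∈ MI, ∀ v ∈ e, v ∈ U := by
    intro e he v hv
    have h2 := hMIsub he
    induction e using Sym2.ind with
    | _ x y =>
      rw [SimpleGraph.mem_edgeSet] at h2
      rcases Sym2.mem_iff.mp hv with rfl | rfl
      · exact h2.2.1
      · exact h2.2.2
  have hMIG' : MI ⊆ (G ⊔ SimpleGraph.fromEdgeSet ΔE).edgeSet := by
    intro e he
    have h2 := hMIsub he
    induction e using Sym2.ind with
    | _ x y =>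
      rw [SimpleGraph.mem_edgeSet] at h2 ⊢
      exact h2.1
  have hUuncov : ∀ v ∈ U, ¬ CoveredBy M v := by
    intro v hv; rw [hU] at hv; exact hv.1
  have hMG' : M ⊆ (G ⊔ SimpleGraph.fromEdgeSet ΔE).edgeSet := by
    intro e he
    have := hMsub he
    rw [SimpleGraph.edgeSet_sup]
    exact Or.inl this
  constructor
  · constructor
    · intro e he
      rcases he with he | he
      · exact hMG' he
      · exact hMIG' he
    · intro e he f hf hef v hve hvf
      rcases he with he | he <;> rcases hf with hf | hf
      · exact hMdisj e he f hf hef v hve hvf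
      · exact hUuncov v (hMIU f hf v hvf) ⟨e, he, hve⟩
      · exact hUuncov v (hMIU e he v hve) ⟨f, hf, hvf⟩
      · exact hMIdisj e he f hf hef v hve hvf
  · intro e he hne hins
    -- endpoints of e are uncovered by M
    have huncovM : ∀ v ∈ e, ¬ CoveredBy M v := by
      rintro v hv ⟨f, hf, hvf⟩
      have hef : e ≠ f := by rintro rfl; exact hne (Or.inl hf)
      exact hins.2 e (Set.mem_insert _ _)
        f (Set.mem_insert_of_mem _ (Or.inl hf)) hef v hv hvf
    have huncovMI : ∀ v ∈ e, ¬ CoveredBy MI v := by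
      rintro v hv ⟨f, hf, hvf⟩
      have hef : e ≠ f := by rintro rfl; exact hne (Or.inr hf)
      exact hins.2 e (Set.mem_insert _ _)
        f (Set.mem_insert_of_mem _ (Or.inr hf)) hef v hv hvf
    rw [SimpleGraph.edgeSet_sup] at he
    rcases he with heG | heΔ
    · -- e is an edge of G: contradicts maximality of M
      have heM : e ∉ M := fun h => hne (Or.inl h)
      apply hMmax e heG heM
      constructor
      · intro f hf
        rcases hf with rfl | hf
        · exact heG
        · exact hMsub hf
      · intro a ha b hb hab v hv
        exact hins.2 a (Set.insert_subset_insert Set.subset_union_left ha)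
          b (Set.insert_subset_insert Set.subset_union_left hb) hab v hv
    · -- e comes from ΔE
      rw [SimpleGraph.edgeSet_fromEdgeSet] at heΔ
      have heΔE : e ∈ ΔE := heΔ.1
      have heU : ∀ v ∈ e, v ∈ U := by
        intro v hv
        rw [hU]
        exact ⟨huncovM v hv, e, heΔE, hv⟩
      have heGI : e ∈ (inducedOn (G ⊔ SimpleGraph.fromEdgeSet ΔE) U).edgeSet := by
        induction e using Sym2.ind with
        | _ x y =>
          rw [SimpleGraph.mem_edgeSet]
          refine ⟨?_, heU x (Sym2.mem_mk_left x y), heU y (Sym2.mem_mk_right x y)⟩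
          rw [SimpleGraph.sup_adj]
          exact Or.inr ⟨heΔE, fun h => heΔ.2 (by simp [h, Sym2.isDiag_iff_proj_eq])⟩
      have heMI : e ∉ MI := fun h => hne (Or.inr h)
      apply hMImax e heGI heMI
      constructor
      · intro f hf
        rcases hf with rfl | hf
        · exact heGI
        · exact hMIsub hf
      · intro a ha b hb hab v hv
        exact hins.2 a (Set.insert_subset_insert Set.subset_union_right ha)
          b (Set.insert_subset_insert Set.subset_union_right hb) hab v hv
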